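/- arXiv:2007.12521 — 2 statements merged into one kernel-verified Lean document; each statement's English description precedes it below -/
import Mathlib

section
/- For ϑ₀ > -1/2, α > 0, Δ > 0, suppose the joint measure Q of two consecutive observations satisfies: ∫∫ x² dQ = (ϑ₀+1)/α, ∫∫ x⁴ dQ = (ϑ₀+1)(ϑ₀+2)/α², ∫∫ x² y² dQ = (ϑ₀+1)²/α² + e^{−2αΔ}(ϑ₀+1)/α², and Q is symmetric in (x,y). Then ∫∫ g(x,y,ϑ₀)² dQ = (1 − e^{−4αΔ})/(ϑ₀+1), where g(x,y,ϑ) = 1 − αy²/(ϑ+1) − e^{−2αΔ}(1 − αx²/(ϑ+1)). -/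
open MeasureTheory Real

theorem quadratic_variation_term
    (ϑ₀ α Δ : ℝ) (hϑ : ϑ₀ > -1/2) (hα : α > 0) (hΔ : Δ > 0)
    (Q : Measure (ℝ × ℝ)) [IsProbabilityMeasure Q]
    (hsymm : Q.map Prod.swap = Q)
    (hI2 : Integrable (fun p : ℝ × ℝ => p.1^2) Q)
    (hI4 : Integrable (fun p : ℝ × ℝ => p.1^4) Q)
    (hI22 : Integrable (fun p : ℝ × ℝ => p.1^2 * p.2^2) Q)
    (hm2 : ∫ p : ℝ × ℝ, p.1^2 ∂Q = (ϑ₀ + 1) / α)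
    (hm4 : ∫ p : ℝ × ℝ, p.1^4 ∂Q = (ϑ₀ + 1) * (ϑ₀ + 2) / α^2)
    (hm22 : ∫ p : ℝ × ℝ, p.1^2 * p.2^2 ∂Q
      = (ϑ₀ + 1)^2 / α^2 + Real.exp (-2*α*Δ) * (ϑ₀ + 1) / α^2) :
    ∫ p : ℝ × ℝ,
        (1 - α * p.2^2 / (ϑ₀ + 1)
          - Real.exp (-2*α*Δ) * (1 - α * p.1^2 / (ϑ₀ + 1)))^2 ∂Q
      = (1 - Real.exp (-4*α*Δ)) / (ϑ₀ + 1) := by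
  have hc : ϑ₀ + 1 > 0 := by linarith
  have hc' : (ϑ₀ + 1) ≠ 0 := ne_of_gt hc
  have hα' : α ≠ 0 := ne_of_gt hα
  set E := Real.exp (-2*α*Δ) with hE
  have hE2 : Real.exp (-4*α*Δ) = E * E := by
    rw [hE, ← Real.exp_add]; ring_nf
  -- swap facts
  have hswapeq : Q.map ((MeasurableEquiv.prodComm : ℝ × ℝ ≃ᵐ ℝ × ℝ)) = Q := hsymm
  have hswapInt : ∀ f : ℝ × ℝ → ℝ, Integrable f Q →
      Integrable (fun p : ℝ × ℝ => f p.swap) Q := by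
    intro f hf
    have := (MeasureTheory.integrable_map_equiv ((MeasurableEquiv.prodComm : ℝ × ℝ ≃ᵐ ℝ × ℝ)) f).mp
      (by rwa [hswapeq])
    exact this
  have hswapInteg : ∀ f : ℝ × ℝ → ℝ,
      ∫ p : ℝ × ℝ, f p.swap ∂Q = ∫ p : ℝ × ℝ, f p ∂Q := by
    intro f
    conv_rhs => rw [← hswapeq]
    rw [MeasureTheory.integral_map_equiv]
    rfl
  have hI2' : Integrable (fun p : ℝ × ℝ => p.2^2) Q :=
    hswapInt (fun p => p.1^2) hI2
  have hI4' : Integrable (fun p : ℝ × ℝ => p.2^4) Q :=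
    hswapInt (fun p => p.1^4) hI4
  have hm2' : ∫ p : ℝ × ℝ, p.2^2 ∂Q = (ϑ₀ + 1) / α := by
    rw [← hm2]; exact hswapInteg (fun p => p.1^2)
  have hm4' : ∫ p : ℝ × ℝ, p.2^4 ∂Q = (ϑ₀ + 1) * (ϑ₀ + 2) / α^2 := by
    rw [← hm4]; exact hswapInteg (fun p => p.1^4)
  have hfun : ∀ p : ℝ × ℝ,
      (1 - α * p.2^2 / (ϑ₀ + 1) - E * (1 - α * p.1^2 / (ϑ₀ + 1)))^2
      = (1-E)^2 + ((2*(1-E)*E*α/(ϑ₀+1)) * p.1^2 + ((-(2*(1-E)*α/(ϑ₀+1))) * p.2^2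
        + ((E^2*α^2/(ϑ₀+1)^2) * p.1^4 + ((α^2/(ϑ₀+1)^2) * p.2^4
        + (-(2*E*α^2/(ϑ₀+1)^2)) * (p.1^2*p.2^2))))) := by
    intro p
    field_simp
    ring
  simp only [hfun]
  have h5 : Integrable (fun p : ℝ × ℝ => (α^2/(ϑ₀+1)^2) * p.2^4
      + (-(2*E*α^2/(ϑ₀+1)^2)) * (p.1^2*p.2^2)) Q :=
    (hI4'.const_mul _).add (hI22.const_mul _)
  have h4 : Integrable (fun p : ℝ × ℝ => (E^2*α^2/(ϑ₀+1)^2) * p.1^4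
      + ((α^2/(ϑ₀+1)^2) * p.2^4 + (-(2*E*α^2/(ϑ₀+1)^2)) * (p.1^2*p.2^2))) Q :=
    (hI4.const_mul _).add h5
  have h3 : Integrable (fun p : ℝ × ℝ => (-(2*(1-E)*α/(ϑ₀+1))) * p.2^2
      + ((E^2*α^2/(ϑ₀+1)^2) * p.1^4 + ((α^2/(ϑ₀+1)^2) * p.2^4
      + (-(2*E*α^2/(ϑ₀+1)^2)) * (p.1^2*p.2^2)))) Q :=
    (hI2'.const_mul _).add h4
  have h2 : Integrable (fun p : ℝ × ℝ => (2*(1-E)*E*α/(ϑ₀+1)) * p.1^2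
      + ((-(2*(1-E)*α/(ϑ₀+1))) * p.2^2 + ((E^2*α^2/(ϑ₀+1)^2) * p.1^4
      + ((α^2/(ϑ₀+1)^2) * p.2^4 + (-(2*E*α^2/(ϑ₀+1)^2)) * (p.1^2*p.2^2))))) Q :=
    (hI2.const_mul _).add h3
  rw [integral_add (integrable_const _) h2,
    integral_add (hI2.const_mul _) h3,
    integral_add (hI2'.const_mul _) h4,
    integral_add (hI4.const_mul _) h5,
    integral_add (hI4'.const_mul _) (hI22.const_mul _),
    integral_const_mul, integral_const_mul, integral_const_mul,
    integral_const_mul, integral_const_mul,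
    integral_const, measureReal_def, measure_univ, ENNReal.toReal_one, smul_eq_mul, one_mul,
    hm2, hm2', hm4, hm4', hm22, hE2]
  have hEpos : E > 0 := Real.exp_pos _
  field_simp
  ring
end

section
/- Fix ϑ > -1/2 and set, for real β₁, β₂ with (ϑ+2)β₁ + β₂ ≠ 0, R(β₁,β₂) = (ϑ+1)(ϑ+2) · ((ϑ+2)β₁² + 2β₂²) / ((ϑ+2)β₁ + β₂)². Then R(β₁,β₂) ≥ 2(ϑ+1)(ϑ+2)/(2ϑ+5) for all such (β₁,β₂), with equality if and only if β₁ = 2β₂ ≠ 0. -/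
theorem limiting_variance_minimum
    (ϑ : ℝ) (hϑ : ϑ > -1/2) :
    ∀ β₁ β₂ : ℝ, (ϑ + 2) * β₁ + β₂ ≠ 0 →
      ((ϑ + 1) * (ϑ + 2) * ((ϑ + 2) * β₁^2 + 2 * β₂^2) / ((ϑ + 2) * β₁ + β₂)^2
          ≥ 2 * (ϑ + 1) * (ϑ + 2) / (2*ϑ + 5)) ∧
      ((ϑ + 1) * (ϑ + 2) * ((ϑ + 2) * β₁^2 + 2 * β₂^2) / ((ϑ + 2) * β₁ + β₂)^2
          = 2 * (ϑ + 1) * (ϑ + 2) / (2*ϑ + 5)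
        ↔ β₁ = 2 * β₂ ∧ β₂ ≠ 0) := by
  intro β₁ β₂ hne
  have hD : (0:ℝ) < ((ϑ + 2) * β₁ + β₂)^2 := by positivity
  have h5 : (0:ℝ) < 2*ϑ + 5 := by linarith
  have h1 : (0:ℝ) < ϑ + 1 := by linarith
  have h2 : (0:ℝ) < ϑ + 2 := by linarith
  constructor
  · rw [ge_iff_le, div_le_div_iff₀ h5 hD]
    nlinarith [mul_nonneg (mul_nonneg (mul_nonneg h1.le h2.le) h2.le) (sq_nonneg (β₁ - 2*β₂))]
  · rw [div_eq_div_iff hD.ne' h5.ne']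
    constructor
    · intro h
      have key : (ϑ + 1) * (ϑ + 2)^2 * (β₁ - 2*β₂)^2 = 0 := by nlinarith
      have hb : β₁ - 2*β₂ = 0 := by
        have : (β₁ - 2*β₂)^2 = 0 := by
          rcases mul_eq_zero.mp key with h' | h'
          · nlinarith
          · exact h'
        exact sq_eq_zero_iff.mp this
      have hβ1 : β₁ = 2*β₂ := by linarith
      refine ⟨hβ1, ?_⟩
      intro h0
      apply hne
      rw [hβ1, h0]; ring
    · rintro ⟨hβ1, hβ2⟩
      rw [hβ1]; ring
end
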